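/- arXiv:2507.20047 — 3 statements merged into one kernel-verified Lean document; each statement's English description precedes it below -/
import Mathlib

section
/- For any two nonempty disjoint finite clusters A, B ⊆ ℝ^k, (1/2)·min(|A|,|B|)·‖μ(A) - μ(B)‖² ≤ d_Ward(A, B) ≤ min(|A|,|B|)·‖μ(A) - μ(B)‖². -/
open scoped Classical

noncomputable def centroid {k : ℕ} (A : Finset (EuclideanSpace ℝ (Fin k))) :
    EuclideanSpace ℝ (Fin k) :=
  (A.card : ℝ)⁻¹ • ∑ a ∈ A, a

noncomputable def kMeansCost {k : ℕ} (X : Finset (EuclideanSpace ℝ (Fin k))) : ℝ :=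
  ∑ x ∈ X, ‖x - centroid X‖ ^ 2

noncomputable def dWard {k : ℕ} (A B : Finset (EuclideanSpace ℝ (Fin k))) : ℝ :=
  kMeansCost (A ∪ B) - kMeansCost A - kMeansCost B

lemma sum_eq_card_smul_centroid {k : ℕ} (X : Finset (EuclideanSpace ℝ (Fin k)))
    (hX : X.Nonempty) : ∑ x ∈ X, x = (X.card : ℝ) • centroid X := by
  have hc : (X.card : ℝ) ≠ 0 := by
    simpa using Finset.card_ne_zero_of_mem hX.choose_spec
  rw [centroid, smul_inv_smul₀ hc]

lemma parallel_axis {k : ℕ} (X : Finset (EuclideanSpace ℝ (Fin k))) (hX : X.Nonempty)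
    (c : EuclideanSpace ℝ (Fin k)) :
    ∑ x ∈ X, ‖x - c‖ ^ 2 =
      (∑ x ∈ X, ‖x - centroid X‖ ^ 2) + (X.card : ℝ) * ‖centroid X - c‖ ^ 2 := by
  have hsum : ∑ x ∈ X, (x - centroid X) = 0 := by
    rw [Finset.sum_sub_distrib, Finset.sum_const, sum_eq_card_smul_centroid X hX,
      Nat.cast_smul_eq_nsmul ℝ, sub_self]
  have key : ∀ x ∈ X, ‖x - c‖ ^ 2 =
      ‖x - centroid X‖ ^ 2 + 2 * inner ℝ (x - centroid X) (centroid X - c) +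
        ‖centroid X - c‖ ^ 2 := by
    intro x _
    rw [← norm_add_sq_real, sub_add_sub_cancel]
  rw [Finset.sum_congr rfl key]
  rw [Finset.sum_add_distrib, Finset.sum_add_distrib, Finset.sum_const,
    ← Finset.mul_sum, ← sum_inner, hsum, inner_zero_left, mul_zero, add_zero,
    nsmul_eq_mul]

lemma dWard_eq {k : ℕ} (A B : Finset (EuclideanSpace ℝ (Fin k)))
    (hA : A.Nonempty) (hB : B.Nonempty) (hAB : Disjoint A B) :
    dWard A B = ((A.card : ℝ) * B.card / (A.card + B.card)) *
      ‖centroid A - centroid B‖ ^ 2 := by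
  set a : ℝ := (A.card : ℝ) with ha
  set b : ℝ := (B.card : ℝ) with hb
  have ha0 : 0 < a := show (0:ℝ) < (A.card:ℝ) from by exact_mod_cast Finset.card_pos.mpr hA
  have hb0 : 0 < b := show (0:ℝ) < (B.card:ℝ) from by exact_mod_cast Finset.card_pos.mpr hB
  have hn0 : a + b ≠ 0 := by positivity
  have hcard : ((A ∪ B).card : ℝ) = a + b := by
    rw [Finset.card_union_of_disjoint hAB]; push_cast; ring
  set c := centroid (A ∪ B) with hc
  have hcval : c = (a + b)⁻¹ • (a • centroid A + b • centroid B) := by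
    rw [hc, centroid, Finset.sum_union hAB, sum_eq_card_smul_centroid A hA,
      sum_eq_card_smul_centroid B hB, hcard]
  have hAc : centroid A - c = (b / (a + b)) • (centroid A - centroid B) := by
    rw [hcval]
    match_scalars <;> field_simp <;> ring
  have hBc : centroid B - c = (a / (a + b)) • (centroid B - centroid A) := by
    rw [hcval]
    match_scalars <;> field_simp <;> ring
  have hnormA : ‖centroid A - c‖ ^ 2 = (b / (a + b)) ^ 2 * ‖centroid A - centroid B‖ ^ 2 := by
    rw [hAc, norm_smul, mul_pow, Real.norm_eq_abs, sq_abs]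
  have hnormB : ‖centroid B - c‖ ^ 2 = (a / (a + b)) ^ 2 * ‖centroid A - centroid B‖ ^ 2 := by
    rw [hBc, norm_smul, mul_pow, Real.norm_eq_abs, sq_abs, ← norm_neg, neg_sub]
  have hU : kMeansCost (A ∪ B) =
      kMeansCost A + a * ‖centroid A - c‖ ^ 2 +
      (kMeansCost B + b * ‖centroid B - c‖ ^ 2) := by
    rw [kMeansCost, Finset.sum_union hAB, ← hc,
      parallel_axis A hA c, parallel_axis B hB c, kMeansCost, kMeansCost]
  rw [dWard, hU, hnormA, hnormB]
  field_simp
  ring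

theorem ward_approx {k : ℕ} (A B : Finset (EuclideanSpace ℝ (Fin k)))
    (hA : A.Nonempty) (hB : B.Nonempty) (hAB : Disjoint A B) :
    (1 / 2) * (min (A.card : ℝ) (B.card : ℝ)) * ‖centroid A - centroid B‖ ^ 2 ≤ dWard A B ∧
    dWard A B ≤ (min (A.card : ℝ) (B.card : ℝ)) * ‖centroid A - centroid B‖ ^ 2 := by
  rw [dWard_eq A B hA hB hAB]
  set a : ℝ := (A.card : ℝ)
  set b : ℝ := (B.card : ℝ)
  have ha0 : 0 < a := show (0:ℝ) < (A.card:ℝ) from by exact_mod_cast Finset.card_pos.mpr hA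
  have hb0 : 0 < b := show (0:ℝ) < (B.card:ℝ) from by exact_mod_cast Finset.card_pos.mpr hB
  have hd : (0:ℝ) ≤ ‖centroid A - centroid B‖ ^ 2 := by positivity
  have hn : 0 < a + b := by linarith
  constructor
  · apply mul_le_mul_of_nonneg_right _ hd
    rcases le_total a b with h | h
    · rw [min_eq_left h, le_div_iff₀ hn]; nlinarith
    · rw [min_eq_right h]
      rw [le_div_iff₀ hn]; nlinarith
  · apply mul_le_mul_of_nonneg_right _ hd
    rcases le_total a b with h | h
    · rw [min_eq_left h, div_le_iff₀ hn]; nlinarith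
    · rw [min_eq_right h, div_le_iff₀ hn]; nlinarith
end

section
/- Centroid linkage is average-reducible: for any nonempty pairwise disjoint finite clusters A, B, C ⊆ ℝ^k, d_cen(A ∪ B, C) ≥ (d_cen(A, C) + d_cen(B, C))/2 - d_cen(A, B). -/
open scoped Classical

noncomputable def dCen {k : ℕ} (A B : Finset (EuclideanSpace ℝ (Fin k))) : ℝ :=
  ‖centroid A - centroid B‖

lemma key_norm {E : Type*} [NormedAddCommGroup E] [NormedSpace ℝ E]
    (x y : E) (t : ℝ) (ht : 0 ≤ t) (ht1 : t ≤ 1) :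
    ‖t • x + (1 - t) • y‖ ≥ (‖x‖ + ‖y‖) / 2 - ‖x - y‖ := by
  have hrw : t • x + (1 - t) • y = (1/2 : ℝ) • (x + y) + (t - 1/2) • (x - y) := by
    module
  have h1 : ‖x + y‖ ≥ ‖x‖ + ‖y‖ - ‖x - y‖ := by
    have hx : ‖x + y‖ ≥ 2 * ‖x‖ - ‖x - y‖ := by
      have := norm_sub_norm_le ((2:ℝ) • x) (x - y)
      have h2 : (2:ℝ) • x - (x - y) = x + y := by module
      rw [h2] at this
      rw [norm_smul] at this
      simp at this
      linarith
    have hy : ‖x + y‖ ≥ 2 * ‖y‖ - ‖x - y‖ := by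
      have := norm_sub_norm_le ((2:ℝ) • y) (y - x)
      have h2 : (2:ℝ) • y - (y - x) = x + y := by module
      rw [h2] at this
      rw [norm_smul] at this
      have h3 : ‖y - x‖ = ‖x - y‖ := norm_sub_rev y x
      simp [h3] at this
      linarith
    linarith
  have h2 : ‖t • x + (1 - t) • y‖ ≥ ‖(1/2 : ℝ) • (x + y)‖ - ‖(t - 1/2) • (x - y)‖ := by
    rw [hrw]
    have := norm_sub_le ((1/2 : ℝ) • (x + y) + (t - 1/2) • (x - y)) ((t - 1/2) • (x - y))
    simp only [add_sub_cancel_right] at this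
    linarith
  rw [norm_smul, norm_smul] at h2
  have habs : |t - 1/2| ≤ 1/2 := by
    rw [abs_le]; constructor <;> linarith
  have hnn : (0:ℝ) ≤ ‖x - y‖ := norm_nonneg _
  have : |t - 1/2| * ‖x - y‖ ≤ (1/2) * ‖x - y‖ := mul_le_mul_of_nonneg_right habs hnn
  simp only [Real.norm_eq_abs] at h2
  have h12 : |(1/2 : ℝ)| = 1/2 := by norm_num
  rw [h12] at h2
  nlinarith

theorem centroid_average_reducible {k : ℕ} (A B C : Finset (EuclideanSpace ℝ (Fin k)))
    (hA : A.Nonempty) (hB : B.Nonempty) (hC : C.Nonempty)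
    (hAB : Disjoint A B) (hAC : Disjoint A C) (hBC : Disjoint B C) :
    dCen (A ∪ B) C ≥ (dCen A C + dCen B C) / 2 - dCen A B := by
  set a : ℝ := (A.card : ℝ) with ha_def
  set b : ℝ := (B.card : ℝ) with hb_def
  have ha : (0:ℝ) < a := by rw [ha_def]; exact_mod_cast Finset.card_pos.mpr hA
  have hb : (0:ℝ) < b := by rw [hb_def]; exact_mod_cast Finset.card_pos.mpr hB
  set t : ℝ := a / (a + b) with ht_def
  have hab : (0:ℝ) < a + b := by linarith
  have ht0 : 0 ≤ t := by positivity
  have ht1 : t ≤ 1 := by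
    rw [div_le_one hab]; linarith
  have hsumA : ∑ x ∈ A, x = a • centroid A := by
    rw [centroid, smul_smul, mul_inv_cancel₀ ha.ne', one_smul]
  have hsumB : ∑ x ∈ B, x = b • centroid B := by
    rw [centroid, smul_smul, mul_inv_cancel₀ hb.ne', one_smul]
  have hcard : ((A ∪ B).card : ℝ) = a + b := by
    rw [Finset.card_union_of_disjoint hAB]; push_cast; rfl
  have hcen : centroid (A ∪ B) = t • centroid A + (1 - t) • centroid B := by
    rw [centroid, Finset.sum_union hAB, hsumA, hsumB, hcard]
    have h1t : 1 - t = b / (a + b) := by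
      rw [ht_def]; field_simp; ring
    rw [h1t, ht_def]
    rw [smul_add, smul_smul, smul_smul, div_eq_inv_mul, div_eq_inv_mul]
  have hkey := key_norm (centroid A - centroid C) (centroid B - centroid C) t ht0 ht1
  have hrw2 : t • (centroid A - centroid C) + (1 - t) • (centroid B - centroid C)
      = centroid (A ∪ B) - centroid C := by
    rw [hcen]; module
  rw [hrw2] at hkey
  have hrw3 : centroid A - centroid C - (centroid B - centroid C) = centroid A - centroid B := by
    module
  rw [hrw3] at hkey
  simpa [dCen] using hkey
end

section
/- Convexity-based value decrease under merges: let d be a linkage function on finite subsets of ℝ^k, let δ > 0, and let X, A, B be clusters with d(A, B) ≤ 2δ. Define val(C) := 2^(−d(X, C)/(4δ)). If d is average-reducible in the sense that d(A ∪ B, X) ≥ (d(A, X) + d(B, X))/2 − d(A, B) whenever |X| ≥ |A| + |B|, and |A| + |B| ≤ |X|, then val(A ∪ B) ≤ (1/√2)·(val(A) + val(B)). -/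
open scoped Classical

theorem val_decrease_under_merge {k : ℕ}
    (d : Finset (EuclideanSpace ℝ (Fin k)) → Finset (EuclideanSpace ℝ (Fin k)) → ℝ)
    (hsymm : ∀ A B, d A B = d B A)
    (hnonneg : ∀ A B, 0 ≤ d A B)
    (havg : ∀ A B C : Finset (EuclideanSpace ℝ (Fin k)),
      A.card + B.card ≤ C.card → d (A ∪ B) C ≥ (d A C + d B C) / 2 - d A B)
    (δ : ℝ) (hδ : 0 < δ)
    (X A B : Finset (EuclideanSpace ℝ (Fin k)))
    (hAB : d A B ≤ 2 * δ) (hsize : A.card + B.card ≤ X.card) :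
    (2 : ℝ) ^ (-(d X (A ∪ B)) / (4 * δ)) ≤
      (1 / Real.sqrt 2) *
        ((2 : ℝ) ^ (-(d X A) / (4 * δ)) + (2 : ℝ) ^ (-(d X B) / (4 * δ))) := by
  have h4δ : (0:ℝ) < 4*δ := by linarith
  set dA := d X A with hdA
  set dB := d X B with hdB
  set a : ℝ := (2 : ℝ) ^ (-dA / (4 * δ)) with ha
  set b : ℝ := (2 : ℝ) ^ (-dB / (4 * δ)) with hb
  have hapos : 0 < a := Real.rpow_pos_of_pos (by norm_num) _
  have hbpos : 0 < b := Real.rpow_pos_of_pos (by norm_num) _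
  -- lower bound on d X (A ∪ B)
  have h1 : d X (A ∪ B) ≥ (dA + dB)/2 - 2*δ := by
    have h := havg A B X hsize
    rw [hsymm (A ∪ B) X, hsymm A X, hsymm B X] at h
    simp only [← hdA, ← hdB] at h
    linarith
  -- exponent inequality
  have hδ' : δ ≠ 0 := ne_of_gt hδ
  have hexp : -(d X (A ∪ B)) / (4*δ) ≤ 1/2 + (-(dA + dB) / (8*δ)) := by
    rw [div_le_iff₀ h4δ]
    have hr : (1/2 + -(dA + dB)/(8*δ))*(4*δ) = 2*δ - (dA+dB)/2 := by
      field_simp; ring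
    rw [hr]; linarith
  have hstep : (2:ℝ) ^ (-(d X (A ∪ B)) / (4*δ)) ≤
      (2:ℝ) ^ ((1:ℝ)/2 + (-(dA + dB) / (8*δ))) :=
    Real.rpow_le_rpow_of_exponent_le (by norm_num) hexp
  have hsplit : (2:ℝ) ^ ((1:ℝ)/2 + (-(dA + dB) / (8*δ))) =
      Real.sqrt 2 * (2:ℝ) ^ (-(dA + dB) / (8*δ)) := by
    rw [Real.rpow_add (by norm_num), ← Real.sqrt_eq_rpow]
  -- AM-GM part
  have hmul : a * b = (2:ℝ) ^ (-(dA + dB) / (4*δ)) := by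
    rw [ha, hb, ← Real.rpow_add (by norm_num)]
    ring_nf
  have hsq : (2:ℝ) ^ (-(dA + dB) / (8*δ)) = Real.sqrt (a * b) := by
    rw [hmul, Real.sqrt_eq_rpow, ← Real.rpow_mul (by norm_num)]
    congr 1
    rw [mul_one_div, div_div]
    ring_nf
  have hamgm : Real.sqrt (a * b) ≤ (a + b) / 2 := by
    have h1 : Real.sqrt (a*b) ≤ Real.sqrt (((a+b)/2)^2) :=
      Real.sqrt_le_sqrt (by nlinarith [sq_nonneg (a-b)])
    rwa [Real.sqrt_sq (by positivity)] at h1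
  have hs2 : Real.sqrt 2 * Real.sqrt 2 = 2 := Real.mul_self_sqrt (by norm_num)
  have hs2pos : 0 < Real.sqrt 2 := Real.sqrt_pos.mpr (by norm_num)
  calc (2:ℝ) ^ (-(d X (A ∪ B)) / (4*δ))
      ≤ Real.sqrt 2 * Real.sqrt (a * b) := by rw [← hsq, ← hsplit]; exact hstep
    _ ≤ Real.sqrt 2 * ((a + b)/2) := by nlinarith
    _ = (1 / Real.sqrt 2) * (a + b) := by
        field_simp
        nlinarith
end
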